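/- Let T be an infinite rooted tree without terminal vertices, ψ : T → ℂ, φ : T → T, and suppose ψC_φ is bounded from 𝓛 to L^∞. If for every ε > 0 there exists N such that |ψ(v)|·|φ(v)| < ε whenever |φ(v)| > N, then ψC_φ : 𝓛 → L^∞ is compact. -/

import Mathlib

open scoped Classical

/-- An infinite rooted tree without terminal vertices, encoded by its root `o`,
the parent map, and the distance-to-root function `len`. Local finiteness and
absence of terminal vertices are part of the structure. -/
structure InfRootedTree (T : Type*) where
  o : T
  parent : T → T
  len : T → ℕ
  len_o : len o = 0
  parent_o : parent o = o
  len_parent : ∀ v, v ≠ o → len (parent v) + 1 = len v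
  reach : ∀ v, parent^[len v] v = o
  no_terminal : ∀ v, ∃ w, w ≠ o ∧ parent w = v
  locally_finite : ∀ v, {w | parent w = v}.Finite

/-- The discrete derivative `Df(v) = f(v) - f(v⁻)`, `Df(o) = 0`. -/
noncomputable def Dop {T : Type*} (t : InfRootedTree T) (f : T → ℂ) (v : T) : ℂ :=
  if v = t.o then 0 else f v - f (t.parent v)

/-- Membership in the Lipschitz space `𝓛`. -/
def InLip {T : Type*} (t : InfRootedTree T) (f : T → ℂ) : Prop :=
  BddAbove (Set.range fun v => ‖Dop t f v‖)

/-- The Lipschitz norm `‖f‖_𝓛 = |f(o)| + sup_v |Df(v)|`. -/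
noncomputable def lipNorm {T : Type*} (t : InfRootedTree T) (f : T → ℂ) : ℝ :=
  ‖f t.o‖ + ⨆ v, ‖Dop t f v‖

open scoped BoundedContinuousFunction


lemma len_eq_zero {T : Type*} (t : InfRootedTree T) {w : T} (hw : t.len w = 0) : w = t.o := by
  have := t.reach w
  rwa [hw, Function.iterate_zero, id_eq] at this

lemma finite_len_le {T : Type*} (t : InfRootedTree T) (N : ℕ) :
    {w : T | t.len w ≤ N}.Finite := by
  induction N with
  | zero =>
    refine Set.Finite.subset (Set.finite_singleton t.o) fun w hw => ?_
    exact len_eq_zero t (Nat.le_zero.mp hw)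
  | succ n ih =>
    have : {w : T | t.len w ≤ n + 1} ⊆
        {w : T | t.len w ≤ n} ∪ ⋃ v ∈ {w : T | t.len w ≤ n}, {w | t.parent w = v} := by
      intro w hw
      have hw' : t.len w ≤ n + 1 := hw
      rcases le_or_gt (t.len w) n with h1 | h1
      · exact Or.inl h1
      · have hne : w ≠ t.o := by
          intro he; rw [he, t.len_o] at h1; omega
        have hp := t.len_parent w hne
        refine Or.inr ?_
        have hle : t.len (t.parent w) ≤ n := by omega
        exact Set.mem_biUnion (s := {w : T | t.len w ≤ n}) hle rfl
    refine Set.Finite.subset (ih.union (ih.biUnion fun v _ => t.locally_finite v)) this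

lemma iSup_Dop_nonneg {T : Type*} (t : InfRootedTree T) (f : T → ℂ) :
    0 ≤ ⨆ v, ‖Dop t f v‖ :=
  Real.iSup_nonneg fun _ => norm_nonneg _

lemma growth {T : Type*} (t : InfRootedTree T) {f : T → ℂ} (hf : InLip t f)
    (hn : lipNorm t f ≤ 1) : ∀ w, ‖f w‖ ≤ 1 + t.len w := by
  have hsup : ∀ v, ‖Dop t f v‖ ≤ 1 := fun v => by
    have h1 : ‖Dop t f v‖ ≤ ⨆ v, ‖Dop t f v‖ := le_ciSup hf v
    have h2 : ⨆ v, ‖Dop t f v‖ ≤ 1 - ‖f t.o‖ := by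
      unfold lipNorm at hn; linarith
    have := norm_nonneg (f t.o); linarith
  have ho : ‖f t.o‖ ≤ 1 := by
    have := iSup_Dop_nonneg t f
    unfold lipNorm at hn; linarith
  have key : ∀ n : ℕ, ∀ w, t.len w = n → ‖f w‖ ≤ 1 + n := by
    intro n
    induction n with
    | zero =>
      intro w hw
      rw [len_eq_zero t hw]
      simpa using ho
    | succ m ih =>
      intro w hw
      have hne : w ≠ t.o := by
        intro he; rw [he, t.len_o] at hw; omega
      have hp := t.len_parent w hne
      have hlp : t.len (t.parent w) = m := by omega
      have h1 := ih (t.parent w) hlp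
      have hD : Dop t f w = f w - f (t.parent w) := by
        simp [Dop, hne]
      have : ‖f w‖ ≤ ‖f (t.parent w)‖ + ‖Dop t f w‖ := by
        rw [hD]
        calc ‖f w‖ = ‖f (t.parent w) + (f w - f (t.parent w))‖ := by ring_nf
          _ ≤ _ := norm_add_le _ _
      have h2 := hsup w
      push_cast
      push_cast at h1
      linarith
  intro w
  exact key (t.len w) w rfl


/-- if `ψC_φ : 𝓛 → L^∞` is bounded and `|ψ(v)|·|φ(v)| → 0` as
`|φ(v)| → ∞`, then `ψC_φ : 𝓛 → L^∞` is compact, i.e. the image of the unit ball of `𝓛`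
is relatively compact in `L^∞ = T →ᵇ ℂ` (`T` discrete). -/
theorem stmt12 {T : Type*} [TopologicalSpace T] [DiscreteTopology T] (t : InfRootedTree T)
    (ψ : T → ℂ) (φ : T → T)
    (hb : ∃ C : ℝ, ∀ f : T → ℂ, InLip t f → ∀ v, ‖ψ v * f (φ v)‖ ≤ C * lipNorm t f)
    (h : ∀ ε : ℝ, 0 < ε → ∃ N : ℕ, ∀ v, N < t.len (φ v) → ‖ψ v‖ * t.len (φ v) < ε) :
    IsCompact (closure {g : T →ᵇ ℂ | ∃ f : T → ℂ, InLip t f ∧ lipNorm t f ≤ 1 ∧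
      ∀ v, g v = ψ v * f (φ v)}) := by
  haveI : Nonempty T := ⟨t.o⟩
  obtain ⟨C, hC⟩ := hb
  -- bound on ψ
  have hone : InLip t (fun _ => (1 : ℂ)) := by
    refine ⟨1, ?_⟩
    rintro x ⟨v, rfl⟩
    have : Dop t (fun _ => (1:ℂ)) v = 0 := by unfold Dop; split <;> simp
    simp [this]
  have hlipone : lipNorm t (fun _ => (1 : ℂ)) = 1 := by
    unfold lipNorm
    have : ∀ v, ‖Dop t (fun _ => (1 : ℂ)) v‖ = 0 := fun v => by
      have : Dop t (fun _ => (1:ℂ)) v = 0 := by unfold Dop; split <;> simp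
      simp [this]
    simp only [this, ciSup_const]
    simp
  have hψ : ∀ v, ‖ψ v‖ ≤ C := by
    intro v
    have := hC (fun _ => (1 : ℂ)) hone v
    rwa [hlipone, mul_one, mul_one] at this
  have hC0 : 0 ≤ C := le_trans (norm_nonneg _) (hψ t.o)
  -- total boundedness
  refine TotallyBounded.isCompact_of_isClosed ?_ isClosed_closure
  apply TotallyBounded.closure
  rw [Metric.totallyBounded_iff]
  intro ε hε
  obtain ⟨N, hN⟩ := h (ε / 16) (by linarith)
  set B : Set (T → ℂ) := {f | InLip t f ∧ lipNorm t f ≤ 1} with hB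
  -- tail bound
  have tail : ∀ f ∈ B, ∀ v, N < t.len (φ v) → ‖ψ v * f (φ v)‖ ≤ ε / 4 := by
    rintro f ⟨hf1, hf2⟩ v hv
    have h1 : ‖f (φ v)‖ ≤ 1 + t.len (φ v) := growth t hf1 hf2 (φ v)
    have h2 : (1 : ℝ) + t.len (φ v) ≤ 2 * t.len (φ v) := by
      have h0 : 1 ≤ t.len (φ v) := by omega
      have : (1 : ℝ) ≤ t.len (φ v) := by exact_mod_cast h0
      linarith
    have h3 := hN v hv
    have h4 : ‖ψ v * f (φ v)‖ ≤ ‖ψ v‖ * (2 * t.len (φ v)) := by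
      rw [norm_mul]
      exact mul_le_mul_of_nonneg_left (h1.trans h2) (norm_nonneg _)
    nlinarith [norm_nonneg (ψ v)]
  -- finite window
  set Wfin : Finset T := (finite_len_le t N).toFinset with hW
  set Θ : (T → ℂ) → (Wfin → ℂ) := fun f w => f w with hΘ
  have hXsub : Θ '' B ⊆ Set.univ.pi (fun _ : Wfin => Metric.closedBall (0 : ℂ) (1 + N)) := by
    rintro _ ⟨f, hf, rfl⟩ w _
    simp only [Metric.mem_closedBall, dist_zero_right]
    have := growth t hf.1 hf.2 w
    have hwN : t.len (w : T) ≤ N := by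
      exact (Set.Finite.mem_toFinset (finite_len_le t N)).mp w.2
    calc ‖Θ f w‖ ≤ 1 + (t.len (w : T) : ℝ) := this
      _ ≤ 1 + N := by exact_mod_cast add_le_add_right (Nat.cast_le.mpr hwN) 1
  have hXtb : TotallyBounded (Θ '' B) := by
    refine TotallyBounded.subset hXsub ?_
    exact (isCompact_univ_pi fun _ => isCompact_closedBall 0 _).totallyBounded
  set δ : ℝ := ε / (8 * (C + 1)) with hδ
  have hδ0 : 0 < δ := by positivity
  obtain ⟨D, hDfin, hDcov⟩ := Metric.totallyBounded_iff.mp hXtb δ hδ0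
  -- for each d ∈ D with a B-preimage nearby, pick a witness
  classical
  -- define center functions
  have hrep : ∀ d ∈ D, (∃ f ∈ B, dist (Θ f) d < δ) →
      ∃ f ∈ B, dist (Θ f) d < δ := fun _ _ hd => hd
  choose! rep hrepB hrepd using fun d (hd : ∃ f ∈ B, dist (Θ f) d < δ) => hd
  -- bounded functions as centers
  have hbd : ∀ f ∈ B, ∀ v, ‖ψ v * f (φ v)‖ ≤ C := by
    rintro f ⟨hf1, hf2⟩ v
    calc ‖ψ v * f (φ v)‖ ≤ C * lipNorm t f := hC f hf1 v
      _ ≤ C * 1 := by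
          refine mul_le_mul_of_nonneg_left hf2 hC0
      _ = C := mul_one C
  set mk : (T → ℂ) → (T →ᵇ ℂ) := fun f =>
    if hf : f ∈ B then
      BoundedContinuousFunction.ofNormedAddCommGroup (fun v => ψ v * f (φ v))
        continuous_of_discreteTopology C (hbd f hf)
    else 0 with hmk
  refine ⟨mk '' (rep '' D), (hDfin.image _).image _, ?_⟩
  rintro g ⟨f, hf1, hf2, hfg⟩
  have hfB : f ∈ B := ⟨hf1, hf2⟩
  have hΘf : Θ f ∈ Θ '' B := ⟨f, hfB, rfl⟩
  obtain ⟨d, hdD, hdball⟩ := Set.mem_iUnion₂.mp (hDcov hΘf)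
  have hrepex : ∃ f ∈ B, dist (Θ f) d < δ := ⟨f, hfB, hdball⟩
  have hfd_B : rep d ∈ B := hrepB d hrepex
  have hfd_d : dist (Θ (rep d)) d < δ := hrepd d hrepex
  refine Set.mem_iUnion₂.mpr ⟨mk (rep d), ⟨rep d, ⟨d, hdD, rfl⟩, rfl⟩, ?_⟩
  rw [Metric.mem_ball]
  have key : dist g (mk (rep d)) ≤ ε / 2 := by
    rw [BoundedContinuousFunction.dist_le (by linarith)]
    intro v
    have hmkv : (mk (rep d)) v = ψ v * (rep d) (φ v) := by
      simp [hmk, hfd_B]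
    rw [hfg v, hmkv, dist_eq_norm]
    rcases le_or_gt (t.len (φ v)) N with hle | hlt
    · -- window case
      have hφW : φ v ∈ Wfin := by simp [hW]; exact hle
      have hdist : dist (f (φ v)) ((rep d) (φ v)) < 2 * δ := by
        have h1 : dist (Θ f ⟨φ v, hφW⟩) (Θ (rep d) ⟨φ v, hφW⟩) ≤ dist (Θ f) (Θ (rep d)) :=
          dist_le_pi_dist _ _ _
        have h2 : dist (Θ f) (Θ (rep d)) < 2 * δ := by
          calc dist (Θ f) (Θ (rep d)) ≤ dist (Θ f) d + dist d (Θ (rep d)) := dist_triangle _ _ _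
            _ < δ + δ := by rw [dist_comm d]; exact add_lt_add hdball hfd_d
            _ = 2 * δ := by ring
        exact lt_of_le_of_lt h1 h2
      have : ‖ψ v * f (φ v) - ψ v * (rep d) (φ v)‖ = ‖ψ v‖ * ‖f (φ v) - (rep d) (φ v)‖ := by
        rw [← mul_sub, norm_mul]
      rw [this]
      have h3 : ‖f (φ v) - (rep d) (φ v)‖ ≤ 2 * δ := by
        rw [← dist_eq_norm]; exact hdist.le
      calc ‖ψ v‖ * ‖f (φ v) - (rep d) (φ v)‖ ≤ C * (2 * δ) := by
            exact mul_le_mul (hψ v) h3 (norm_nonneg _) hC0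
        _ = 2 * C * (ε / (8 * (C + 1))) := by rw [hδ]; ring
        _ ≤ ε / 2 := by
            have h4 : (0:ℝ) < C + 1 := by linarith
            rw [show (2:ℝ)*C*(ε/(8*(C+1))) = C*ε/(4*(C+1)) from by field_simp; ring,
              div_le_div_iff₀ (by positivity) two_pos]
            nlinarith
    · -- tail case
      calc ‖ψ v * f (φ v) - ψ v * (rep d) (φ v)‖
          ≤ ‖ψ v * f (φ v)‖ + ‖ψ v * (rep d) (φ v)‖ := norm_sub_le _ _
        _ ≤ ε / 4 + ε / 4 := add_le_add (tail f hfB v hlt) (tail (rep d) hfd_B v hlt)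
        _ = ε / 2 := by ring
  linarith
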